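/- The function g(x) = (1/√λ) sinh_{√λ}(x) satisfies g(x) = x + λ ∫_0^x ∫_0^y g(t) dμ(t) dy for all x ∈ [0,1]; i.e. it solves Δ_μ g = λ g with g(0) = 0 and g'(0) = 1. -/

import Mathlib

open MeasureTheory Set Real Filter
open scoped ENNReal NNReal

noncomputable def genP (μ : Measure ℝ) : ℕ → ℝ → ℝ
  | 0 => fun _ => 1
  | k + 1 => fun x =>
      if Odd (k + 1) then ∫ t in (0:ℝ)..x, genP μ k t ∂μ
      else ∫ t in (0:ℝ)..x, genP μ k t

noncomputable def genQ (μ : Measure ℝ) : ℕ → ℝ → ℝ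
  | 0 => fun _ => 1
  | k + 1 => fun x =>
      if Odd (k + 1) then ∫ t in (0:ℝ)..x, genQ μ k t
      else ∫ t in (0:ℝ)..x, genQ μ k t ∂μ

noncomputable def genCosh (μ : Measure ℝ) (z : ℝ) (x : ℝ) : ℝ :=
  ∑' k : ℕ, z ^ (2 * k) * genP μ (2 * k) x

noncomputable def genSinh (μ : Measure ℝ) (z : ℝ) (x : ℝ) : ℝ :=
  ∑' k : ℕ, z ^ (2 * k + 1) * genQ μ (2 * k + 1) x

/-- sup-distance between distribution functions on [0,1] -/
noncomputable def distSup (μ ν : Measure ℝ) : ℝ :=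
  ⨆ x : Set.Icc (0:ℝ) 1, |(μ (Set.Icc 0 (x:ℝ))).toReal - (ν (Set.Icc 0 (x:ℝ))).toReal|


/-- (1/√λ) sinh_{√λ}(x) = Σ_{k≥0} λ^k q_{2k+1}(x) -/
noncomputable def sinhL (μ : Measure ℝ) (l : ℝ) (x : ℝ) : ℝ :=
  ∑' k : ℕ, l ^ k * genQ μ (2 * k + 1) x

section Aux

lemma genQ_even_eq (μ : Measure ℝ) (k : ℕ) (y : ℝ) :
    genQ μ (2*k+2) y = ∫ t in (0:ℝ)..y, genQ μ (2*k+1) t ∂μ := by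
  rw [show 2*k+2 = (2*k+1)+1 from rfl, genQ]; beta_reduce
  rw [if_neg (by simp [Nat.even_add_one, parity_simps])]

lemma genQ_odd_eq (μ : Measure ℝ) (k : ℕ) (y : ℝ) :
    genQ μ (2*k+3) y = ∫ t in (0:ℝ)..y, genQ μ (2*k+2) t := by
  rw [show 2*k+3 = (2*k+2)+1 from rfl, genQ]; beta_reduce
  rw [if_pos (by simp [Nat.even_add_one, parity_simps])]

lemma genQ_one_eq (μ : Measure ℝ) (y : ℝ) : genQ μ 1 y = y := by
  rw [show 1 = 0+1 from rfl, genQ]; beta_reduce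
  rw [if_pos (by norm_num)]
  simp [genQ]

lemma primitive_mono_nonneg (ν : Measure ℝ) [IsLocallyFiniteMeasure ν] {f : ℝ → ℝ}
    (hmono : MonotoneOn f (Ici 0)) (hpos : ∀ x ∈ Ici (0:ℝ), 0 ≤ f x) :
    MonotoneOn (fun x => ∫ t in (0:ℝ)..x, f t ∂ν) (Ici 0) ∧
      ∀ x ∈ Ici (0:ℝ), 0 ≤ ∫ t in (0:ℝ)..x, f t ∂ν := by
  have hint : ∀ a b : ℝ, 0 ≤ a → 0 ≤ b → IntervalIntegrable f ν a b := by
    intro a b ha hb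
    exact (hmono.mono (fun x hx => le_trans (le_min ha hb) hx.1)).intervalIntegrable
  constructor
  · intro x hx y hy hxy
    have h1 := hint 0 x le_rfl hx
    have h2 := hint x y hx hy
    have hadd := intervalIntegral.integral_add_adjacent_intervals h1 h2
    have h3 : 0 ≤ ∫ t in x..y, f t ∂ν :=
      intervalIntegral.integral_nonneg hxy fun u hu => hpos u (le_trans hx hu.1)
    simp only []
    linarith
  · intro x hx
    exact intervalIntegral.integral_nonneg hx fun u hu => hpos u hu.1

lemma genQ_mono_nonneg (μ : Measure ℝ) [IsProbabilityMeasure μ] (n : ℕ) :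
    MonotoneOn (genQ μ n) (Ici 0) ∧ ∀ x ∈ Ici (0:ℝ), 0 ≤ genQ μ n x := by
  induction n with
  | zero =>
    exact ⟨fun x _ y _ _ => le_rfl, fun x _ => zero_le_one⟩
  | succ k ih =>
    rw [genQ]
    by_cases h : Odd (k+1)
    · simp only [if_pos h]
      exact primitive_mono_nonneg volume ih.1 ih.2
    · simp only [if_neg h]
      exact primitive_mono_nonneg μ ih.1 ih.2

lemma genQ_integrableOn (μ : Measure ℝ) [IsProbabilityMeasure μ] (ν : Measure ℝ)
    [IsLocallyFiniteMeasure ν] (n : ℕ) {y : ℝ} (hy : 0 ≤ y) :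
    IntegrableOn (genQ μ n) (Ioc 0 y) ν := by
  have h := ((genQ_mono_nonneg μ n).1.mono (Icc_subset_Ici_self : Icc (0:ℝ) y ⊆ Ici 0))
  exact (h.integrableOn_isCompact isCompact_Icc).mono_set Ioc_subset_Icc_self

lemma genQ_aesm (μ : Measure ℝ) [IsProbabilityMeasure μ] (ν : Measure ℝ)
    [IsLocallyFiniteMeasure ν] (n : ℕ) {y : ℝ} (hy : 0 ≤ y) :
    AEStronglyMeasurable (genQ μ n) (ν.restrict (Ioc 0 y)) :=
  (genQ_integrableOn μ ν n hy).aestronglyMeasurable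

lemma genQ_bound (μ : Measure ℝ) [IsProbabilityMeasure μ] (k : ℕ) :
    (∀ x ∈ Icc (0:ℝ) 1, genQ μ (2*k+1) x ≤ x^k / k.factorial) ∧
    (∀ x ∈ Icc (0:ℝ) 1, genQ μ (2*k+2) x ≤ x^k / k.factorial) := by
  have step_even : ∀ k : ℕ, (∀ x ∈ Icc (0:ℝ) 1, genQ μ (2*k+1) x ≤ x^k / k.factorial) →
      ∀ y ∈ Icc (0:ℝ) 1, genQ μ (2*k+2) y ≤ y^k / k.factorial := by
    intro k hodd y hy
    rw [genQ_even_eq, intervalIntegral.integral_of_le hy.1]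
    have hIoc : Ioc (0:ℝ) y ⊆ Icc 0 1 := fun t ht => ⟨ht.1.le, ht.2.trans hy.2⟩
    have hint : IntegrableOn (genQ μ (2*k+1)) (Ioc 0 y) μ := genQ_integrableOn μ μ _ hy.1
    have hC : (0:ℝ) ≤ y^k / k.factorial :=
      div_nonneg (pow_nonneg hy.1 k) (Nat.cast_nonneg _)
    calc ∫ t in Ioc 0 y, genQ μ (2*k+1) t ∂μ
        ≤ ∫ _t in Ioc 0 y, y^k / k.factorial ∂μ := by
          refine setIntegral_mono_on hint
            (integrableOn_const (measure_lt_top _ _).ne) measurableSet_Ioc ?_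
          intro t ht
          calc genQ μ (2*k+1) t ≤ t^k / k.factorial := hodd t (hIoc ht)
            _ ≤ y^k / k.factorial := by
              gcongr
              exacts [ht.1.le, ht.2]
      _ = (μ (Ioc 0 y)).toReal * (y^k / k.factorial) := by
          rw [setIntegral_const]; rfl
      _ ≤ 1 * (y^k / k.factorial) := by
          refine mul_le_mul_of_nonneg_right ?_ hC
          simpa using ENNReal.toReal_mono ENNReal.one_ne_top prob_le_one
      _ = y^k / k.factorial := one_mul _
  have step_odd : ∀ k : ℕ, (∀ y ∈ Icc (0:ℝ) 1, genQ μ (2*k+2) y ≤ y^k / k.factorial) →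
      ∀ x ∈ Icc (0:ℝ) 1, genQ μ (2*k+3) x ≤ x^(k+1) / (k+1).factorial := by
    intro k heven x hx
    rw [genQ_odd_eq]
    have h1 : IntervalIntegrable (genQ μ (2*k+2)) volume 0 x := by
      refine ((genQ_mono_nonneg μ (2*k+2)).1.mono ?_).intervalIntegrable
      intro t ht
      exact le_trans (le_min le_rfl hx.1) ht.1
    have h2 : IntervalIntegrable (fun y : ℝ => y^k / k.factorial) volume 0 x :=
      (Continuous.div_const (continuous_pow k) _).intervalIntegrable 0 x
    have hfk : (k.factorial : ℝ) ≠ 0 := Nat.cast_ne_zero.2 (Nat.factorial_ne_zero k)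
    have hk1 : ((k:ℝ)+1) ≠ 0 := by positivity
    calc (∫ y in (0:ℝ)..x, genQ μ (2*k+2) y)
        ≤ ∫ y in (0:ℝ)..x, y^k / k.factorial :=
          intervalIntegral.integral_mono_on hx.1 h1 h2
            (fun y hy => heven y ⟨hy.1, le_trans hy.2 hx.2⟩)
      _ = x^(k+1) / (k+1).factorial := by
          simp only [div_eq_mul_inv]
          rw [intervalIntegral.integral_mul_const, integral_pow]
          rw [Nat.factorial_succ]
          push_cast
          field_simp
          simp
  induction k with
  | zero =>
    constructor
    · intro x hx
      rw [show 2*0+1 = 1 from rfl, genQ_one_eq]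
      simpa using hx.2
    · exact step_even 0 (by
        intro x hx
        rw [show 2*0+1 = 1 from rfl, genQ_one_eq]
        simpa using hx.2)
  | succ k ih =>
    have hodd := step_odd k ih.2
    have hodd' : ∀ x ∈ Icc (0:ℝ) 1, genQ μ (2*(k+1)+1) x ≤ x^(k+1) / (k+1).factorial := by
      intro x hx
      rw [show 2*(k+1)+1 = 2*k+3 by ring]
      exact hodd x hx
    exact ⟨hodd', step_even (k+1) hodd'⟩

lemma genQ_odd_le (μ : Measure ℝ) [IsProbabilityMeasure μ] (k : ℕ) {x : ℝ}
    (hx : x ∈ Icc (0:ℝ) 1) : genQ μ (2*k+1) x ≤ 1 / k.factorial := by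
  refine le_trans ((genQ_bound μ k).1 x hx) ?_
  gcongr
  exact pow_le_one₀ hx.1 hx.2

lemma genQ_even_le (μ : Measure ℝ) [IsProbabilityMeasure μ] (k : ℕ) {x : ℝ}
    (hx : x ∈ Icc (0:ℝ) 1) : genQ μ (2*k+2) x ≤ 1 / k.factorial := by
  refine le_trans ((genQ_bound μ k).2 x hx) ?_
  gcongr
  exact pow_le_one₀ hx.1 hx.2

lemma summable_aux {l : ℝ} (hl : 0 < l) {g : ℕ → ℝ} (hg0 : ∀ k, 0 ≤ g k)
    (hg : ∀ k, g k ≤ 1 / k.factorial) :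
    Summable (fun k => l^k * g k) := by
  refine Summable.of_nonneg_of_le (fun k => mul_nonneg (pow_nonneg hl.le k) (hg0 k))
    (fun k => ?_) (Real.summable_pow_div_factorial l)
  calc l^k * g k ≤ l^k * (1 / k.factorial) := by
        refine mul_le_mul_of_nonneg_left (hg k) (pow_nonneg hl.le k)
    _ = l^k / k.factorial := by ring

/-- generic swap of `∑'` and a set integral over `Ioc 0 y` -/
lemma swap_tsum_integral (μ : Measure ℝ) [IsProbabilityMeasure μ] (ν : Measure ℝ)
    [IsLocallyFiniteMeasure ν] {l : ℝ} (hl : 0 < l) (m : ℕ → ℕ)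
    (hbd : ∀ k, ∀ t ∈ Icc (0:ℝ) 1, genQ μ (m k) t ≤ 1 / k.factorial)
    {y : ℝ} (hy : y ∈ Icc (0:ℝ) 1) (hν : ν (Ioc 0 y) ≤ 1) :
    ∫ t in Ioc 0 y, (∑' k : ℕ, l^k * genQ μ (m k) t) ∂ν
      = ∑' k : ℕ, l^k * ∫ t in Ioc 0 y, genQ μ (m k) t ∂ν := by
  have hIoc : Ioc (0:ℝ) y ⊆ Icc 0 1 := fun t ht => ⟨ht.1.le, ht.2.trans hy.2⟩
  rw [integral_tsum]
  · exact tsum_congr fun k => integral_const_mul _ _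
  · exact fun k => ((genQ_aesm μ ν (m k) hy.1).const_mul _)
  · have hb : ∀ k : ℕ, (∫⁻ t in Ioc 0 y, ‖l^k * genQ μ (m k) t‖₊ ∂ν)
        ≤ ENNReal.ofReal (l^k / k.factorial) := by
      intro k
      have hae : ∀ᵐ t ∂(ν.restrict (Ioc 0 y)),
          (‖l^k * genQ μ (m k) t‖₊ : ℝ≥0∞) ≤ ENNReal.ofReal (l^k / k.factorial) := by
        refine (ae_restrict_iff' measurableSet_Ioc).2 (ae_of_all _ fun t ht => ?_)
        have h1 : 0 ≤ genQ μ (m k) t := (genQ_mono_nonneg μ _).2 t ht.1.le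
        have h2 : genQ μ (m k) t ≤ 1 / k.factorial := hbd k t (hIoc ht)
        have hnorm : ‖l^k * genQ μ (m k) t‖ ≤ l^k / k.factorial := by
          rw [Real.norm_eq_abs, abs_of_nonneg (mul_nonneg (pow_nonneg hl.le k) h1)]
          calc l^k * genQ μ (m k) t ≤ l^k * (1 / k.factorial) :=
                mul_le_mul_of_nonneg_left h2 (pow_nonneg hl.le k)
            _ = l^k / k.factorial := by ring
        calc (‖l^k * genQ μ (m k) t‖₊ : ℝ≥0∞)
            = ENNReal.ofReal ‖l^k * genQ μ (m k) t‖ := (ofReal_norm _).symm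
          _ ≤ _ := ENNReal.ofReal_le_ofReal hnorm
      calc ∫⁻ t in Ioc 0 y, ‖l^k * genQ μ (m k) t‖₊ ∂ν
          ≤ ∫⁻ _t in Ioc 0 y, ENNReal.ofReal (l^k / k.factorial) ∂ν := lintegral_mono_ae hae
        _ = ENNReal.ofReal (l^k / k.factorial) * ν (Ioc 0 y) := by rw [setLIntegral_const]
        _ ≤ ENNReal.ofReal (l^k / k.factorial) * 1 := by gcongr
        _ = _ := mul_one _
    refine ne_top_of_le_ne_top ?_ (ENNReal.tsum_le_tsum hb)
    rw [← ENNReal.ofReal_tsum_of_nonneg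
      (fun k => div_nonneg (pow_nonneg hl.le k) (Nat.cast_nonneg _))
      (Real.summable_pow_div_factorial l)]
    exact ENNReal.ofReal_ne_top

lemma inner_eq (μ : Measure ℝ) [IsProbabilityMeasure μ] {l : ℝ} (hl : 0 < l)
    {y : ℝ} (hy : y ∈ Icc (0:ℝ) 1) :
    (∫ t in (0:ℝ)..y, sinhL μ l t ∂μ) = ∑' k : ℕ, l^k * genQ μ (2*k+2) y := by
  rw [intervalIntegral.integral_of_le hy.1]
  simp only [sinhL]
  rw [swap_tsum_integral μ μ hl (fun k => 2*k+1) (fun k t ht => genQ_odd_le μ k ht) hy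
    prob_le_one]
  refine tsum_congr fun k => ?_
  rw [genQ_even_eq, intervalIntegral.integral_of_le hy.1]

end Aux

theorem stmt_14 (μ : Measure ℝ) [IsProbabilityMeasure μ]
    (hsupp : μ (Set.Icc (0:ℝ) 1)ᶜ = 0) (hna : ∀ x : ℝ, μ {x} = 0)
    (h0 : ∀ ε > (0:ℝ), 0 < μ (Set.Icc 0 ε)) (h1 : ∀ ε > (0:ℝ), 0 < μ (Set.Icc (1 - ε) 1))
    (l : ℝ) (hl : 0 < l) :
    ∀ x ∈ Set.Icc (0:ℝ) 1,
      sinhL μ l x = x + l * ∫ y in (0:ℝ)..x, (∫ t in (0:ℝ)..y, sinhL μ l t ∂μ) := by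
  intro x hx
  have houter : (∫ y in (0:ℝ)..x, (∫ t in (0:ℝ)..y, sinhL μ l t ∂μ))
      = ∫ y in (0:ℝ)..x, (∑' k : ℕ, l^k * genQ μ (2*k+2) y) := by
    refine intervalIntegral.integral_congr fun y hy => ?_
    rw [uIcc_of_le hx.1] at hy
    exact inner_eq μ hl ⟨hy.1, hy.2.trans hx.2⟩
  have hB : (∫ y in (0:ℝ)..x, (∑' k : ℕ, l^k * genQ μ (2*k+2) y))
      = ∑' k : ℕ, l^k * genQ μ (2*k+3) x := by
    rw [intervalIntegral.integral_of_le hx.1]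
    have hvol : volume (Ioc (0:ℝ) x) ≤ 1 := by
      rw [Real.volume_Ioc]
      simpa using ENNReal.ofReal_le_one.2 (by linarith [hx.2])
    rw [swap_tsum_integral μ volume hl (fun k => 2*k+2) (fun k t ht => genQ_even_le μ k ht)
      hx hvol]
    refine tsum_congr fun k => ?_
    rw [genQ_odd_eq, intervalIntegral.integral_of_le hx.1]
  rw [houter, hB]
  have hsum : Summable (fun k : ℕ => l^k * genQ μ (2*k+1) x) :=
    summable_aux hl (fun k => (genQ_mono_nonneg μ _).2 x hx.1)
      (fun k => genQ_odd_le μ k hx)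
  simp only [sinhL]
  rw [hsum.tsum_eq_zero_add]
  have h0' : l^0 * genQ μ (2*0+1) x = x := by
    rw [pow_zero, one_mul, show 2*0+1 = 1 from rfl, genQ_one_eq]
  rw [h0']
  congr 1
  rw [← tsum_mul_left]
  refine tsum_congr fun k => ?_
  rw [show 2*(k+1)+1 = 2*k+3 by ring, pow_succ]
  ring
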